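/- Let G be a Hausdorff topological gyrogroup, H a locally compact strongly L-subgyrogroup of G (i.e. H with the subspace topology is locally compact), and π : G → G/H the natural quotient mapping. Then there exists an open neighbourhood U of the neutral element 0 in G such that π(cl(U)) is closed in G/H and the restriction of π to cl(U) is a perfect mapping of cl(U) onto the subspace π(cl(U)). -/

import Mathlib

universe u

/-- A gyrogroup: a groupoid with identity, inverses, gyroautomorphisms satisfying the
left gyroassociative law and the left loop property. -/
class Gyrogroup (G : Type u) where
  add : G → G → G
  zero : G
  neg : G → G
  gyr : G → G → G → G
  zero_add : ∀ x, add zero x = x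
  add_zero : ∀ x, add x zero = x
  neg_add : ∀ x, add (neg x) x = zero
  add_neg : ∀ x, add x (neg x) = zero
  gyr_bijective : ∀ a b, Function.Bijective (gyr a b)
  gyr_add : ∀ a b x y, gyr a b (add x y) = add (gyr a b x) (gyr a b y)
  gyrassoc : ∀ a b z, add a (add b z) = add (add a b) (gyr a b z)
  loop : ∀ a b, gyr (add a b) b = gyr a b

/-- A topological gyrogroup: the operation is jointly continuous and inversion is continuous. -/
class TopologicalGyrogroup (G : Type u) [TopologicalSpace G] [Gyrogroup G] : Prop where
  continuous_add : Continuous fun p : G × G => Gyrogroup.add p.1 p.2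
  continuous_neg : Continuous (Gyrogroup.neg : G → G)

/-- `H` is a subgyrogroup of `G` (by the subgyrogroup criterion: nonempty and closed
under the operation and inversion; this is equivalent to `(H, ⊕|H)` being itself a
gyrogroup whose gyroautomorphisms are the restrictions of those of `G`). -/
structure IsSubgyrogroup {G : Type u} [Gyrogroup G] (H : Set G) : Prop where
  nonempty : H.Nonempty
  add_mem : ∀ ⦃a⦄, a ∈ H → ∀ ⦃b⦄, b ∈ H → Gyrogroup.add a b ∈ H
  neg_mem : ∀ ⦃a⦄, a ∈ H → Gyrogroup.neg a ∈ H

/-- An `L`-subgyrogroup: a subgyrogroup with `gyr[a,h](H) = H` for all `a ∈ G`, `h ∈ H`. -/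
structure IsLSubgyrogroup {G : Type u} [Gyrogroup G] (H : Set G)
    extends IsSubgyrogroup H : Prop where
  gyr_image : ∀ (a : G), ∀ ⦃h⦄, h ∈ H → Gyrogroup.gyr a h '' H = H

/-- A strongly `L`-subgyrogroup: a subgyrogroup with `gyr[a,b](H) ⊆ H` for all `a, b ∈ G`. -/
structure IsStronglyLSubgyrogroup {G : Type u} [Gyrogroup G] (H : Set G)
    extends IsSubgyrogroup H : Prop where
  gyr_image_subset : ∀ a b : G, Gyrogroup.gyr a b '' H ⊆ H

/-- The pointwise sum `A ⊕ B = {a ⊕ b : a ∈ A, b ∈ B}` of two subsets. -/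
def setAdd {G : Type u} [Gyrogroup G] (A B : Set G) : Set G :=
  Set.image2 Gyrogroup.add A B

/-- The left coset `a ⊕ H = {a ⊕ h : h ∈ H}`. -/
def lCoset {G : Type u} [Gyrogroup G] (H : Set G) (a : G) : Set G :=
  (fun h => Gyrogroup.add a h) '' H

/-- The setoid on `G` identifying points with the same left coset modulo `H`. -/
def cosetSetoid {G : Type u} [Gyrogroup G] (H : Set G) : Setoid G :=
  ⟨fun x y => lCoset H x = lCoset H y,
   ⟨fun _ => rfl, fun h => h.symm, fun h₁ h₂ => h₁.trans h₂⟩⟩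

/-- The coset space `G/H`, carrying the quotient topology: a set `O ⊆ G/H` is open
iff `π⁻¹(O)` is open in `G`. -/
abbrev GyroQuot {G : Type u} [Gyrogroup G] (H : Set G) : Type u :=
  Quotient (cosetSetoid H)

/-- The natural quotient map `π : G → G/H`, `a ↦ a ⊕ H`. -/
def qmap {G : Type u} [Gyrogroup G] (H : Set G) (a : G) : GyroQuot H :=
  Quotient.mk (cosetSetoid H) a

set_option linter.unusedSectionVars false

namespace GyroProof
open Gyrogroup (gyr gyr_add gyrassoc loop gyr_bijective)

variable {G : Type u} [Gyrogroup G]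

local infixl:65 " ⊹ " => Gyrogroup.add
local prefix:100 "∸" => Gyrogroup.neg
local notation "𝟬" => Gyrogroup.zero

theorem zadd (x : G) : 𝟬 ⊹ x = x := Gyrogroup.zero_add x
theorem addz (x : G) : x ⊹ 𝟬 = x := Gyrogroup.add_zero x
theorem nadd (x : G) : ∸x ⊹ x = 𝟬 := Gyrogroup.neg_add x
theorem addn (x : G) : x ⊹ ∸x = 𝟬 := Gyrogroup.add_neg x

/-- left cancellation -/
theorem add_left_cancel {a x y : G} (h : a ⊹ x = a ⊹ y) : x = y := by
  have h2 : (∸a ⊹ a) ⊹ gyr (∸a) a x = (∸a ⊹ a) ⊹ gyr (∸a) a y := by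
    rw [← gyrassoc, ← gyrassoc, h]
  rw [nadd, zadd, zadd] at h2
  exact (gyr_bijective (∸a) a).1 h2

theorem gyr_zero_left (b : G) (z : G) : gyr 𝟬 b z = z := by
  have := gyrassoc (𝟬 : G) b z
  rw [zadd, zadd] at this
  exact (add_left_cancel this.symm)

theorem gyr_right_zero (a : G) (z : G) : gyr a 𝟬 z = z := by
  have := gyrassoc a (𝟬 : G) z
  rw [zadd, addz] at this
  exact (add_left_cancel this.symm)

theorem gyr_neg_self (a : G) (z : G) : gyr (∸a) a z = z := by
  have := loop (∸a) a
  rw [nadd] at this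
  rw [← this, gyr_zero_left]

theorem gyr_self_neg (a : G) (z : G) : gyr a (∸a) z = z := by
  have := loop a (∸a)
  rw [addn] at this
  rw [← this, gyr_zero_left]

theorem neg_add_cancel_left (a b : G) : ∸a ⊹ (a ⊹ b) = b := by
  rw [gyrassoc, nadd, zadd, gyr_neg_self]

theorem add_neg_cancel_left (a b : G) : a ⊹ (∸a ⊹ b) = b := by
  rw [gyrassoc, addn, zadd, gyr_self_neg]

theorem eq_neg_of_add_eq_zero {a b : G} (h : a ⊹ b = 𝟬) : b = ∸a := by
  have : ∸a ⊹ (a ⊹ b) = ∸a ⊹ 𝟬 := by rw [h]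
  rw [neg_add_cancel_left, addz] at this
  exact this

theorem neg_neg (a : G) : ∸(∸a) = a := (eq_neg_of_add_eq_zero (nadd a)).symm

theorem neg_zero : (∸𝟬 : G) = 𝟬 := (eq_neg_of_add_eq_zero (zadd (𝟬 : G))).symm

theorem gyr_zero (a b : G) : gyr a b 𝟬 = 𝟬 := by
  have h : gyr a b (𝟬 ⊹ 𝟬) = gyr a b 𝟬 ⊹ gyr a b 𝟬 := gyr_add a b 𝟬 𝟬
  rw [zadd] at h
  have h2 : gyr a b 𝟬 ⊹ 𝟬 = gyr a b 𝟬 ⊹ gyr a b 𝟬 := by rw [addz]; exact h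
  exact (add_left_cancel h2).symm

theorem gyr_neg (a b x : G) : gyr a b (∸x) = ∸(gyr a b x) := by
  have h : gyr a b x ⊹ gyr a b (∸x) = 𝟬 := by rw [← gyr_add, addn, gyr_zero]
  exact eq_neg_of_add_eq_zero h

theorem gyrator (a b z : G) : gyr a b z = ∸(a ⊹ b) ⊹ (a ⊹ (b ⊹ z)) := by
  rw [gyrassoc a b z, neg_add_cancel_left]

/-- left gyrotranslation theorem -/
theorem lgt (a b c : G) : ∸(a ⊹ b) ⊹ (a ⊹ c) = gyr a b (∸b ⊹ c) := by
  rw [gyrator a b (∸b ⊹ c), add_neg_cancel_left]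

theorem add_gyr_neg (x y : G) : (x ⊹ y) ⊹ gyr x y (∸y) = x := by
  rw [← gyrassoc, addn, addz]

/-- nested gyration identity -/
theorem nested (a b c z : G) :
    gyr a (b ⊹ c) (gyr b c z) = gyr (a ⊹ b) (gyr a b c) (gyr a b z) := by
  have e1 : (a ⊹ (b ⊹ c)) ⊹ gyr a (b ⊹ c) (gyr b c z) = a ⊹ (b ⊹ (c ⊹ z)) := by
    rw [← gyrassoc, ← gyrassoc]
  have e2 : ((a ⊹ b) ⊹ gyr a b c) ⊹ gyr (a ⊹ b) (gyr a b c) (gyr a b z)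
      = a ⊹ (b ⊹ (c ⊹ z)) := by
    rw [← gyrassoc, ← gyr_add, ← gyrassoc]
  have e3 : (a ⊹ (b ⊹ c)) = (a ⊹ b) ⊹ gyr a b c := gyrassoc a b c
  rw [e3] at e1
  exact add_left_cancel (e1.trans e2.symm)

theorem gyr_left_inv (a b z : G) :
    gyr (a ⊹ b) (∸(gyr a b b)) (gyr a b z) = z := by
  have h := nested a b (∸b) z
  rw [gyr_self_neg, gyr_neg] at h
  calc gyr (a ⊹ b) (∸(gyr a b b)) (gyr a b z)
      = gyr a (b ⊹ ∸b) z := h.symm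
    _ = z := by rw [addn, gyr_right_zero]

theorem gyr_right_inv (a b z : G) :
    gyr a b (gyr (a ⊹ b) (∸(gyr a b b)) z) = z := by
  obtain ⟨w, rfl⟩ := (gyr_bijective a b).2 z
  rw [gyr_left_inv]

theorem add_right_cancel {x y a : G} (h : x ⊹ a = y ⊹ a) : x = y := by
  have hx : x = (x ⊹ a) ⊹ gyr (x ⊹ a) a (∸a) := by rw [loop, add_gyr_neg]
  have hy : y = (y ⊹ a) ⊹ gyr (y ⊹ a) a (∸a) := by rw [loop, add_gyr_neg]
  rw [hx, hy, h]

/-- right division -/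
def rdiv (b a : G) : G := b ⊹ gyr b a (∸a)

theorem rdiv_add_cancel (b a : G) : rdiv b a ⊹ a = b := by
  have step1 : (b ⊹ a) ⊹ gyr b a (∸a) = b := add_gyr_neg b a
  have step2 : gyr b (gyr b a (∸a)) = gyr (b ⊹ a) (gyr b a (∸a)) := by
    have h := loop (b ⊹ a) (gyr b a (∸a))
    rw [step1] at h
    exact h
  have step3 : ∀ z, gyr (b ⊹ a) (gyr b a (∸a)) (gyr b a z) = z := by
    intro z
    have h := gyr_left_inv b a z
    rw [gyr_neg]
    exact h
  have key : a = gyr b (gyr b a (∸a)) (gyr b a a) := by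
    rw [step2]; exact (step3 a).symm
  show (b ⊹ gyr b a (∸a)) ⊹ a = b
  have final : (b ⊹ gyr b a (∸a)) ⊹ gyr b (gyr b a (∸a)) (gyr b a a) = b := by
    rw [← gyrassoc, ← gyr_add, nadd, gyr_zero, addz]
  rw [← key] at final
  exact final

theorem rdiv_self (x : G) : rdiv x x = 𝟬 := by
  have h1 : rdiv x x ⊹ x = x := rdiv_add_cancel x x
  have h2 : (𝟬 : G) ⊹ x = x := zadd x
  exact add_right_cancel (h1.trans h2.symm)


end GyroProof

namespace GyroProof
open Gyrogroup (gyr gyr_add gyrassoc loop gyr_bijective)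

variable {G : Type u} [Gyrogroup G]

local infixl:65 " ⊹ " => Gyrogroup.add
local prefix:100 "∸" => Gyrogroup.neg
local notation "𝟬" => Gyrogroup.zero

section Cosets

variable {H : Set G} (hH : IsStronglyLSubgyrogroup H)
include hH

theorem zero_mem : 𝟬 ∈ H := by
  obtain ⟨h, hh⟩ := hH.nonempty
  have := hH.add_mem (hH.neg_mem hh) hh
  rwa [nadd] at this

theorem gyr_mem {h : G} (hh : h ∈ H) (a b : G) : gyr a b h ∈ H :=
  hH.gyr_image_subset a b ⟨h, hh, rfl⟩

theorem gyr_mem_rev {h : G} (a b : G) (hh : gyr a b h ∈ H) : h ∈ H := by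
  have h2 := gyr_mem hH hh (a ⊹ b) (∸(gyr a b b))
  rwa [gyr_left_inv] at h2

theorem mem_lCoset_iff {a x : G} : x ∈ lCoset H a ↔ ∸a ⊹ x ∈ H := by
  constructor
  · rintro ⟨h, hh, rfl⟩
    rwa [neg_add_cancel_left]
  · intro hx
    exact ⟨∸a ⊹ x, hx, add_neg_cancel_left a x⟩

theorem neg_left_mem_symm {a b : G} (h : ∸a ⊹ b ∈ H) : ∸b ⊹ a ∈ H := by
  have hb : b = a ⊹ (∸a ⊹ b) := (add_neg_cancel_left a b).symm
  have key : ∸b ⊹ a = gyr a (∸a ⊹ b) (∸(∸a ⊹ b)) := by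
    have l := lgt a (∸a ⊹ b) (𝟬 : G)
    rw [addz, ← hb] at l
    rw [l, addz]
  rw [key]
  exact gyr_mem hH (hH.neg_mem h) _ _

theorem same_coset_diff {z p q : G} (hp : p ∈ lCoset H z) (hq : q ∈ lCoset H z) :
    ∸p ⊹ q ∈ H := by
  obtain ⟨η, hη, rfl⟩ := hp
  obtain ⟨η', hη', rfl⟩ := hq
  rw [lgt]
  exact gyr_mem hH (hH.add_mem (hH.neg_mem hη) hη') _ _

theorem mem_lCoset_symm {p q : G} (h : q ∈ lCoset H p) : p ∈ lCoset H q := by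
  rw [mem_lCoset_iff hH] at h ⊢
  exact neg_left_mem_symm hH h

theorem coset_eq_iff {x y : G} : lCoset H x = lCoset H y ↔ ∸x ⊹ y ∈ H := by
  constructor
  · intro h
    have : y ∈ lCoset H y := ⟨𝟬, zero_mem hH, addz y⟩
    rw [← h, mem_lCoset_iff hH] at this
    exact this
  · intro h0
    ext z
    rw [mem_lCoset_iff hH, mem_lCoset_iff hH]
    have hy : y = x ⊹ (∸x ⊹ y) := (add_neg_cancel_left x y).symm
    have key : ∸y ⊹ z = gyr x (∸x ⊹ y) (∸(∸x ⊹ y) ⊹ (∸x ⊹ z)) := by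
      have l := lgt x (∸x ⊹ y) (∸x ⊹ z)
      rw [add_neg_cancel_left x y, add_neg_cancel_left x z] at l
      exact l
    constructor
    · intro hw
      rw [key]
      exact gyr_mem hH (hH.add_mem (hH.neg_mem h0) hw) _ _
    · intro hw
      rw [key] at hw
      have hq : ∸(∸x ⊹ y) ⊹ (∸x ⊹ z) ∈ H := gyr_mem_rev hH _ _ hw
      have := hH.add_mem h0 hq
      rwa [add_neg_cancel_left] at this

theorem qmap_eq_iff {x y : G} : qmap H x = qmap H y ↔ ∸x ⊹ y ∈ H := by
  rw [← coset_eq_iff hH]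
  exact ⟨fun h => Quotient.exact h, fun h => Quotient.sound h⟩

theorem mem_setAdd_iff {A : Set G} {x : G} :
    x ∈ setAdd A H ↔ ∃ a ∈ A, ∸a ⊹ x ∈ H := by
  constructor
  · rintro ⟨a, ha, h, hh, rfl⟩
    exact ⟨a, ha, by rwa [neg_add_cancel_left]⟩
  · rintro ⟨a, ha, h⟩
    exact ⟨a, ha, ∸a ⊹ x, h, add_neg_cancel_left a x⟩

theorem qmap_preimage_image (A : Set G) :
    qmap H ⁻¹' (qmap H '' A) = setAdd A H := by
  ext x
  simp only [Set.mem_preimage, Set.mem_image, mem_setAdd_iff hH]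
  constructor
  · rintro ⟨a, ha, h⟩
    exact ⟨a, ha, by rw [qmap_eq_iff hH] at h; exact h⟩
  · rintro ⟨a, ha, h⟩
    exact ⟨a, ha, by rw [qmap_eq_iff hH]; exact h⟩

theorem lCoset_eq_of_mem {z p : G} (hp : p ∈ lCoset H z) :
    lCoset H p = lCoset H z := by
  rw [coset_eq_iff hH]
  rw [mem_lCoset_iff hH] at hp
  exact neg_left_mem_symm hH hp

end Cosets

section Topo
open Topology Filter

variable [TopologicalSpace G] [TopologicalGyrogroup G]

theorem _root_.Continuous.gadd {X : Type*} [TopologicalSpace X] {f g : X → G}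
    (hf : Continuous f) (hg : Continuous g) : Continuous fun x => f x ⊹ g x :=
  TopologicalGyrogroup.continuous_add.comp (hf.prodMk hg)

theorem _root_.Continuous.gneg {X : Type*} [TopologicalSpace X] {f : X → G}
    (hf : Continuous f) : Continuous fun x => ∸(f x) :=
  TopologicalGyrogroup.continuous_neg.comp hf

theorem _root_.Continuous.ggyr {X : Type*} [TopologicalSpace X] {f g h : X → G}
    (hf : Continuous f) (hg : Continuous g) (hh : Continuous h) :
    Continuous fun x => gyr (f x) (g x) (h x) := by
  have e : (fun x => gyr (f x) (g x) (h x))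
      = fun x => ∸(f x ⊹ g x) ⊹ (f x ⊹ (g x ⊹ h x)) :=
    funext fun x => gyrator (f x) (g x) (h x)
  rw [e]
  exact ((hf.gadd hg).gneg).gadd (hf.gadd (hg.gadd hh))

theorem closure_subset_setAdd {A W : Set G} (hW : IsOpen W) (h0 : 𝟬 ∈ W) :
    closure A ⊆ setAdd A W := by
  intro x hx
  have hM : IsOpen ((fun a : G => ∸a ⊹ x) ⁻¹' W) :=
    hW.preimage ((continuous_id.gneg).gadd continuous_const)
  have hxM : x ∈ (fun a : G => ∸a ⊹ x) ⁻¹' W := by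
    simp only [Set.mem_preimage, nadd, h0]
  obtain ⟨a, haM, haA⟩ := mem_closure_iff_nhds.mp hx _ (hM.mem_nhds hxM)
  exact ⟨a, haA, ∸a ⊹ x, haM, add_neg_cancel_left a x⟩

theorem isClosed_lCoset {H : Set G} (hH : IsStronglyLSubgyrogroup H)
    (hHc : IsClosed H) (z : G) : IsClosed (lCoset H z) := by
  have : lCoset H z = (fun x : G => ∸z ⊹ x) ⁻¹' H := by
    ext x; rw [Set.mem_preimage, mem_lCoset_iff hH]
  rw [this]
  exact hHc.preimage ((continuous_const.gneg).gadd continuous_id)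

theorem plate_compact [T2Space G] {H K S : Set G} (hH : IsStronglyLSubgyrogroup H)
    (hHc : IsClosed H) (hK : IsCompact K)
    (hsmall : ∀ p ∈ S, ∀ q ∈ S, ∸p ⊹ q ∈ H → ∸p ⊹ q ∈ K)
    (hS : IsClosed S) (z : G) : IsCompact (S ∩ lCoset H z) := by
  by_cases hne : (S ∩ lCoset H z).Nonempty
  · obtain ⟨p, hpS, hpC⟩ := hne
    have hsub : S ∩ lCoset H z ⊆ (fun k => p ⊹ k) '' K := by
      rintro q ⟨hqS, hqC⟩
      refine ⟨∸p ⊹ q, ?_, add_neg_cancel_left p q⟩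
      exact hsmall p hpS q hqS (same_coset_diff hH hpC hqC)
    have himg : IsCompact ((fun k => p ⊹ k) '' K) :=
      hK.image (continuous_const.gadd continuous_id)
    exact himg.of_isClosed_subset (hS.inter (isClosed_lCoset hH hHc z)) hsub
  · rw [Set.not_nonempty_iff_eq_empty] at hne
    rw [hne]
    exact isCompact_empty

theorem H_isClosed [T2Space G] {H K Ω : Set G} (hH : IsStronglyLSubgyrogroup H)
    (hK : IsCompact K) (hKH : K ⊆ H)
    (hΩ : IsOpen Ω) (h0 : 𝟬 ∈ Ω)
    (habs : ∀ a ∈ Ω, ∀ b ∈ Ω, a ⊹ b ∈ H → a ⊹ b ∈ K) :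
    IsClosed H := by
  apply isClosed_of_closure_subset
  intro x hx
  have hM : IsOpen ((fun a : G => ∸a ⊹ x) ⁻¹' Ω) :=
    hΩ.preimage ((continuous_id.gneg).gadd continuous_const)
  have hxM : x ∈ (fun a : G => ∸a ⊹ x) ⁻¹' Ω := by
    simp only [Set.mem_preimage, nadd, h0]
  obtain ⟨h, hhM, hhH⟩ := mem_closure_iff_nhds.mp hx _ (hM.mem_nhds hxM)
  set y := ∸h ⊹ x with hy
  have hyΩ : y ∈ Ω := hhM
  have hycl : y ∈ closure H := by
    have hc : Continuous (fun w : G => ∸h ⊹ w) :=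
      (continuous_const.gneg).gadd continuous_id
    have himg : (fun w : G => ∸h ⊹ w) '' H = H := by
      ext w
      constructor
      · rintro ⟨η, hη, rfl⟩; exact hH.add_mem (hH.neg_mem hhH) hη
      · intro hw; exact ⟨h ⊹ w, hH.add_mem hhH hw, neg_add_cancel_left h w⟩
    have : y ∈ (fun w : G => ∸h ⊹ w) '' closure H := ⟨x, hx, rfl⟩
    have h2 := image_closure_subset_closure_image hc this
    rwa [himg] at h2
  have hyK : y ∈ K := by
    have hKcl : IsClosed K := hK.isClosed
    rw [← hKcl.closure_eq]
    rw [mem_closure_iff_nhds]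
    intro N hN
    have hM2 : IsOpen ((fun w : G => ∸y ⊹ w) ⁻¹' Ω) :=
      hΩ.preimage ((continuous_const.gneg).gadd continuous_id)
    have hyM2 : y ∈ (fun w : G => ∸y ⊹ w) ⁻¹' Ω := by
      simp only [Set.mem_preimage, nadd, h0]
    have hN' : N ∩ ((fun w : G => ∸y ⊹ w) ⁻¹' Ω) ∈ 𝓝 y :=
      Filter.inter_mem hN (hM2.mem_nhds hyM2)
    obtain ⟨h₅, ⟨h₅N, h₅M⟩, h₅H⟩ := mem_closure_iff_nhds.mp hycl _ hN'
    refine ⟨h₅, h₅N, ?_⟩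
    have : y ⊹ (∸y ⊹ h₅) ∈ K := habs y hyΩ _ h₅M (by rw [add_neg_cancel_left]; exact h₅H)
    rwa [add_neg_cancel_left] at this
  have : h ⊹ y ∈ H := hH.add_mem hhH (hKH hyK)
  rwa [hy, add_neg_cancel_left] at this

theorem clusterPt_map_prod {α X Y : Type*} [TopologicalSpace X] [TopologicalSpace Y]
    {l : Filter α} {f : α → X} {g : α → Y} {a : X} {b : Y}
    (hf : ClusterPt a (Filter.map f l)) (hg : Filter.Tendsto g l (𝓝 b)) :
    ClusterPt (a, b) (Filter.map (fun t => (f t, g t)) l) := by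
  rw [clusterPt_iff_nonempty] at hf ⊢
  intro U hU V hV
  rw [nhds_prod_eq] at hU
  obtain ⟨A, hA, B, hB, hAB⟩ := Filter.mem_prod_iff.mp hU
  have hS : (fun t => (f t, g t)) ⁻¹' V ∩ g ⁻¹' B ∈ l :=
    Filter.inter_mem hV (hg hB)
  have hfS : f '' ((fun t => (f t, g t)) ⁻¹' V ∩ g ⁻¹' B) ∈ Filter.map f l := by
    rw [Filter.mem_map]
    exact Filter.mem_of_superset hS (fun t ht => ⟨t, ht, rfl⟩)
  obtain ⟨w, hwA, t, htS, rfl⟩ := hf hA hfS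
  exact ⟨(f t, g t), hAB ⟨hwA, htS.2⟩, htS.1⟩


theorem tube_closed {H A B Ω F : Set G} (hH : IsStronglyLSubgyrogroup H)
    (hHc : IsClosed H)
    (hΩo : IsOpen Ω) (hΩ0 : 𝟬 ∈ Ω)
    (hAB : ∀ ρ ∈ Ω, ∀ u ∈ A, ρ ⊹ u ∈ B)
    (hplate : ∀ z : G, IsCompact (B ∩ lCoset H z))
    (hF : IsClosed F) (hFA : F ⊆ A) :
    IsClosed (setAdd F H) := by
  apply isClosed_of_closure_subset
  intro x hx
  -- pick the base approximator s̄ with rdiv s̄ x ∈ Ω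
  have crdivx : Continuous (fun s : G => rdiv s x) := by
    unfold rdiv
    exact continuous_id.gadd (continuous_id.ggyr continuous_const continuous_const.gneg)
  have hN₁ : (fun s : G => rdiv s x) ⁻¹' Ω ∈ 𝓝 x := by
    refine (hΩo.preimage crdivx).mem_nhds ?_
    simp only [Set.mem_preimage, rdiv_self, hΩ0]
  obtain ⟨sb, hsbN, hsbS⟩ := mem_closure_iff_nhds.mp hx _ hN₁
  have hρb : rdiv sb x ∈ Ω := hsbN
  -- second neighbourhood : rdiv sb s ∈ Ω for s near x
  have cg₂ : Continuous (fun s : G => rdiv sb s) := by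
    unfold rdiv
    exact continuous_const.gadd (continuous_const.ggyr continuous_id continuous_id.gneg)
  have hN₂ : (fun s : G => rdiv sb s) ⁻¹' Ω ∈ 𝓝 x := by
    refine (hΩo.preimage cg₂).mem_nhds ?_
    simp only [Set.mem_preimage]
    exact hρb
  -- the approximator filter on triples (s, u, h)
  set T : Set (G × G × G) := {t | t.2.1 ∈ F ∧ t.2.2 ∈ H ∧ t.2.1 ⊹ t.2.2 = t.1} with hT
  set 𝔊 : Filter (G × G × G) := Filter.comap Prod.fst (𝓝 x) ⊓ Filter.principal T with h𝔊
  have h𝔊ne : 𝔊.NeBot := by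
    rw [h𝔊, Filter.inf_principal_neBot_iff]
    intro U hU
    obtain ⟨N, hN, hNU⟩ := Filter.mem_comap.mp hU
    obtain ⟨s, hsN, hsS⟩ := mem_closure_iff_nhds.mp hx N hN
    obtain ⟨u, hu, h, hh, huh⟩ := hsS
    exact ⟨(s, u, h), hNU hsN, hu, hh, huh⟩
  have hT𝔊 : T ∈ 𝔊 := Filter.mem_inf_of_right (Filter.mem_principal_self T)
  have hfst : Filter.Tendsto Prod.fst 𝔊 (𝓝 x) :=
    Filter.tendsto_comap.mono_left inf_le_left
  -- the realignment map
  set ζ : G × G × G → G := fun t => rdiv sb t.1 ⊹ t.2.1 with hζ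
  have cζ : Continuous ζ := by
    rw [hζ]
    unfold rdiv
    have c21 : Continuous (fun t : G × G × G => t.2.1) := continuous_fst.comp continuous_snd
    exact (continuous_const.gadd (continuous_const.ggyr continuous_fst
      continuous_fst.gneg)).gadd c21
  -- realigned points lie on the compact plate of sb
  set P : Set G := B ∩ lCoset H sb with hP
  have hζP : ∀ t ∈ T ∩ (Prod.fst ⁻¹' ((fun s : G => rdiv sb s) ⁻¹' Ω)), ζ t ∈ P := by
    rintro ⟨s, u, h⟩ ⟨⟨hu, hh, huh⟩, hsΩ⟩
    have hsΩ' : rdiv sb s ∈ Ω := hsΩ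
    constructor
    · exact hAB _ hsΩ' _ (hFA hu)
    · have key : ζ (s, u, h) ⊹ gyr (rdiv sb s) u h = sb := by
        show (rdiv sb s ⊹ u) ⊹ gyr (rdiv sb s) u h = sb
        rw [← gyrassoc, huh, rdiv_add_cancel]
      rw [mem_lCoset_iff hH]
      have hg : gyr (rdiv sb s) u h ∈ H := gyr_mem hH hh _ _
      have hne : ∸(ζ (s, u, h)) ⊹ sb ∈ H := by
        rw [← key, neg_add_cancel_left]; exact hg
      exact neg_left_mem_symm hH hne
  have hTN₂ : T ∩ (Prod.fst ⁻¹' ((fun s : G => rdiv sb s) ⁻¹' Ω)) ∈ 𝔊 :=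
    Filter.inter_mem hT𝔊 (Filter.mem_inf_of_left (Filter.preimage_mem_comap hN₂))
  have hPmem : P ∈ Filter.map ζ 𝔊 := by
    rw [Filter.mem_map]
    exact Filter.mem_of_superset hTN₂ (fun t ht => hζP t ht)
  -- cluster point on the plate
  set 𝔣 : Filter G := Filter.map ζ 𝔊 ⊓ Filter.principal P with h𝔣
  have h𝔣ne : 𝔣.NeBot := by
    rw [h𝔣, Filter.inf_principal_neBot_iff]
    intro U hU
    have hUP : U ∩ P ∈ Filter.map ζ 𝔊 := Filter.inter_mem hU hPmem
    obtain ⟨t, ht⟩ := Filter.nonempty_of_mem (Filter.mem_map.mp hUP)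
    exact ⟨ζ t, ht⟩
  obtain ⟨u', hu'P, hu'cl⟩ := (hplate sb).exists_clusterPt (f := 𝔣)
    (le_trans inf_le_right (le_of_eq rfl))
  have hu'cl₂ : ClusterPt u' (Filter.map ζ 𝔊) := hu'cl.mono inf_le_left
  -- cluster of the pair (ζ, fst) at (u', x)
  have hpair : ClusterPt (u', x) (Filter.map (fun t => (ζ t, t.1)) 𝔊) :=
    clusterPt_map_prod hu'cl₂ hfst
  -- recover the cluster of the u-components
  set m : G × G → G := fun p => ∸(rdiv sb p.2) ⊹ p.1 with hm
  have cm : Continuous m := by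
    rw [hm]
    unfold rdiv
    exact ((continuous_const.gadd (continuous_const.ggyr continuous_snd
      continuous_snd.gneg)).gneg).gadd continuous_fst
  set uhat : G := ∸(rdiv sb x) ⊹ u' with huhat
  have hmpair : m ∘ (fun t : G × G × G => (ζ t, t.1)) = fun t : G × G × G => t.2.1 := by
    funext t
    show ∸(rdiv sb t.1) ⊹ (rdiv sb t.1 ⊹ t.2.1) = t.2.1
    rw [neg_add_cancel_left]
  have huhatcl : ClusterPt uhat (Filter.map (fun t : G × G × G => t.2.1) 𝔊) := by
    have h2 := hpair.map cm.continuousAt Filter.tendsto_map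
    rw [Filter.map_map, hmpair] at h2
    exact h2
  have huhatF : uhat ∈ F := by
    have hle : Filter.map (fun t : G × G × G => t.2.1) 𝔊 ≤ Filter.principal F := by
      rw [Filter.le_principal_iff, Filter.mem_map]
      exact Filter.mem_of_superset hT𝔊 (fun t ht => ht.1)
    have := mem_closure_iff_clusterPt.mpr (huhatcl.mono hle)
    rwa [hF.closure_eq] at this
  -- recover the cluster of the h-components
  set hhat : G := ∸uhat ⊹ x with hhhat
  have huhatcl₂ : ClusterPt (uhat, x) (Filter.map (fun t : G × G × G => (t.2.1, t.1)) 𝔊) :=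
    clusterPt_map_prod huhatcl hfst
  set φm : G × G → G := fun p => ∸p.1 ⊹ p.2 with hφm
  have cφm : Continuous φm := continuous_fst.gneg.gadd continuous_snd
  have hhhatcl : ClusterPt hhat (Filter.map (fun t : G × G × G => t.2.2) 𝔊) := by
    have h2 := huhatcl₂.map cφm.continuousAt Filter.tendsto_map
    rw [Filter.map_map] at h2
    have hcongr : Filter.map (φm ∘ fun t : G × G × G => (t.2.1, t.1)) 𝔊
        = Filter.map (fun t : G × G × G => t.2.2) 𝔊 := by
      apply Filter.map_congr
      apply Filter.eventuallyEq_of_mem hT𝔊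
      rintro ⟨s, u, h⟩ ⟨hu, hh, huh⟩
      show ∸u ⊹ s = h
      have huh' : u ⊹ h = s := huh
      rw [← huh', neg_add_cancel_left]
    rwa [hcongr] at h2
  have hhhatH : hhat ∈ H := by
    have hle : Filter.map (fun t : G × G × G => t.2.2) 𝔊 ≤ Filter.principal H := by
      rw [Filter.le_principal_iff, Filter.mem_map]
      exact Filter.mem_of_superset hT𝔊 (fun t ht => ht.2.1)
    have := mem_closure_iff_clusterPt.mpr (hhhatcl.mono hle)
    rwa [hHc.closure_eq] at this
  exact ⟨uhat, huhatF, hhat, hhhatH, add_neg_cancel_left uhat x⟩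




theorem exists_add_nbhd {V : Set G} (hV : IsOpen V) (h0 : 𝟬 ∈ V) :
    ∃ Ω : Set G, IsOpen Ω ∧ 𝟬 ∈ Ω ∧ ∀ a ∈ Ω, ∀ b ∈ Ω, a ⊹ b ∈ V := by
  have hc : Continuous fun p : G × G => p.1 ⊹ p.2 := continuous_fst.gadd continuous_snd
  have hopen : IsOpen ((fun p : G × G => p.1 ⊹ p.2) ⁻¹' V) := hV.preimage hc
  have hmem : ((𝟬 : G), (𝟬 : G)) ∈ (fun p : G × G => p.1 ⊹ p.2) ⁻¹' V := by
    simp only [Set.mem_preimage, zadd, h0]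
  obtain ⟨u, v, hu, hv, h0u, h0v, huv⟩ := isOpen_prod_iff.mp hopen 𝟬 𝟬 hmem
  refine ⟨u ∩ v, hu.inter hv, ⟨h0u, h0v⟩, fun a ha b hb => ?_⟩
  exact huv (Set.mk_mem_prod ha.1 hb.2)

theorem exists_div_nbhd {V : Set G} (hV : IsOpen V) (h0 : 𝟬 ∈ V) :
    ∃ Ω : Set G, IsOpen Ω ∧ 𝟬 ∈ Ω ∧ ∀ a ∈ Ω, ∀ b ∈ Ω, ∸a ⊹ b ∈ V := by
  have hc : Continuous fun p : G × G => ∸p.1 ⊹ p.2 := continuous_fst.gneg.gadd continuous_snd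
  have hopen : IsOpen ((fun p : G × G => ∸p.1 ⊹ p.2) ⁻¹' V) := hV.preimage hc
  have hmem : ((𝟬 : G), (𝟬 : G)) ∈ (fun p : G × G => ∸p.1 ⊹ p.2) ⁻¹' V := by
    simp only [Set.mem_preimage, nadd, h0]
  obtain ⟨u, v, hu, hv, h0u, h0v, huv⟩ := isOpen_prod_iff.mp hopen 𝟬 𝟬 hmem
  refine ⟨u ∩ v, hu.inter hv, ⟨h0u, h0v⟩, fun a ha b hb => ?_⟩
  exact huv (Set.mk_mem_prod ha.1 hb.2)

theorem qmap_isQuotientMap (H : Set G) : IsQuotientMap (qmap H) := by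
  have : qmap H = (@Quotient.mk' G (cosetSetoid H)) := rfl
  rw [this]
  exact isQuotientMap_quotient_mk'

end Topo

end GyroProof

open GyroProof

/-- Let `G` be a Hausdorff topological gyrogroup and `H` a locally compact
strongly L-subgyrogroup. Then there is an open neighbourhood `U` of `0` such that
`π(cl U)` is closed in `G/H` and the restriction of `π` to `cl U` is a perfect mapping
of `cl U` onto the subspace `π(cl U)`. -/
theorem stmt_15 {G : Type u} [Gyrogroup G] [TopologicalSpace G] [TopologicalGyrogroup G]
    [T2Space G] (H : Set G) (hH : IsStronglyLSubgyrogroup H)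
    (hlc : LocallyCompactSpace H) :
    ∃ U : Set G, IsOpen U ∧ Gyrogroup.zero ∈ U ∧
      IsClosed (qmap H '' closure U) ∧
      ∀ f : ↥(closure U) → ↥(qmap H '' closure U),
        (∀ x : ↥(closure U), (f x : GyroQuot H) = qmap H x.1) →
        Continuous f ∧ IsClosedMap f ∧ ∀ y, IsCompact (f ⁻¹' {y}) := by
  classical
  -- a compact neighbourhood of 0 in H
  obtain ⟨s, hs𝓝, -, hscomp⟩ :=
    hlc.local_compact_nhds (⟨Gyrogroup.zero, zero_mem hH⟩ : H) Set.univ Filter.univ_mem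
  set K : Set G := Subtype.val '' s with hKdef
  have hK : IsCompact K := hscomp.image continuous_subtype_val
  have hKH : K ⊆ H := by rintro _ ⟨⟨v, hv⟩, -, rfl⟩; exact hv
  rw [nhds_subtype_eq_comap] at hs𝓝
  obtain ⟨N, hN, hNs⟩ := Filter.mem_comap.mp hs𝓝
  set V : Set G := interior N with hVdef
  have hVo : IsOpen V := isOpen_interior
  have hV0 : Gyrogroup.zero ∈ V := mem_interior_iff_mem_nhds.mpr hN
  have hVK : ∀ v ∈ V, v ∈ H → v ∈ K := by
    intro v hv hvH
    have hvN : v ∈ N := interior_subset hv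
    have hmem : (⟨v, hvH⟩ : H) ∈ s := hNs hvN
    exact ⟨⟨v, hvH⟩, hmem, rfl⟩
  -- the neighbourhood chain
  obtain ⟨Ω₁, hΩ₁o, h0₁, hdiv₁⟩ := exists_div_nbhd hVo hV0
  obtain ⟨Ω₂, hΩ₂o, h0₂, hadd₂⟩ := exists_add_nbhd hΩ₁o h0₁
  obtain ⟨Ω₃, hΩ₃o, h0₃, hadd₃⟩ := exists_add_nbhd hΩ₂o h0₂
  obtain ⟨Ω, hΩo, h0Ω, haddΩ⟩ := exists_add_nbhd hΩ₃o h0₃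
  have hΩ₃₂ : Ω₃ ⊆ Ω₂ := fun a ha => by
    have := hadd₃ a ha Gyrogroup.zero h0₃; rwa [addz] at this
  have hΩ₂₁ : Ω₂ ⊆ Ω₁ := fun a ha => by
    have := hadd₂ a ha Gyrogroup.zero h0₂; rwa [addz] at this
  have hΩ₃ : Ω ⊆ Ω₃ := fun a ha => by
    have := haddΩ a ha Gyrogroup.zero h0Ω; rwa [addz] at this
  have hΩ₁V : Ω₁ ⊆ V := fun a ha => by
    have := hdiv₁ Gyrogroup.zero h0₁ a ha; rwa [GyroProof.neg_zero, zadd] at this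
  -- H is closed
  have hHc : IsClosed H := by
    refine H_isClosed hH hK hKH hΩo h0Ω ?_
    intro a ha b hb hab
    exact hVK _ (hΩ₁V (hΩ₂₁ (hΩ₃₂ (haddΩ a ha b hb)))) hab
  -- regions
  set A : Set G := setAdd Ω Ω with hAdef
  set B : Set G := closure (setAdd Ω A) with hBdef
  have hAΩ₃ : A ⊆ Ω₃ := by rintro _ ⟨a, ha, b, hb, rfl⟩; exact haddΩ a ha b hb
  have hBΩ₁ : B ⊆ Ω₁ := by
    have h1 : setAdd Ω A ⊆ Ω₂ := by
      rintro _ ⟨a, ha, b, hb, rfl⟩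
      exact hadd₃ a (hΩ₃ ha) b (hAΩ₃ hb)
    have h2 : B ⊆ setAdd (setAdd Ω A) Ω := closure_subset_setAdd hΩo h0Ω
    intro p hp
    obtain ⟨a, ha, b, hb, rfl⟩ := h2 hp
    exact hadd₂ a (h1 ha) b (hΩ₃₂ (hΩ₃ hb))
  have hsmallB : ∀ p ∈ B, ∀ q ∈ B, Gyrogroup.add (Gyrogroup.neg p) q ∈ H →
      Gyrogroup.add (Gyrogroup.neg p) q ∈ K := fun p hp q hq hmem =>
    hVK _ (hdiv₁ p (hBΩ₁ hp) q (hBΩ₁ hq)) hmem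
  have hplate : ∀ z : G, IsCompact (B ∩ lCoset H z) := fun z =>
    plate_compact hH hHc hK hsmallB isClosed_closure z
  -- the closure of U sits inside A
  have hclUA : closure Ω ⊆ A := closure_subset_setAdd hΩo h0Ω
  have hclUΩ₁ : closure Ω ⊆ Ω₁ := fun p hp => hΩ₂₁ (hΩ₃₂ (hAΩ₃ (hclUA hp)))
  have hsmallclU : ∀ p ∈ closure Ω, ∀ q ∈ closure Ω,
      Gyrogroup.add (Gyrogroup.neg p) q ∈ H → Gyrogroup.add (Gyrogroup.neg p) q ∈ K :=
    fun p hp q hq hmem => hVK _ (hdiv₁ p (hclUΩ₁ hp) q (hclUΩ₁ hq)) hmem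
  have hAB : ∀ ρ ∈ Ω, ∀ u ∈ A, Gyrogroup.add ρ u ∈ B := fun ρ hρ u hu =>
    subset_closure ⟨ρ, hρ, u, hu, rfl⟩
  -- closedness of saturated tubes over closed F ⊆ A
  have htube : ∀ F : Set G, IsClosed F → F ⊆ A → IsClosed (qmap H '' F) := by
    intro F hFc hFA
    have hcl : IsClosed (setAdd F H) :=
      tube_closed hH hHc hΩo h0Ω hAB hplate hFc hFA
    have hpre : qmap H ⁻¹' (qmap H '' F) = setAdd F H := qmap_preimage_image hH F
    rw [← (qmap_isQuotientMap H).isClosed_preimage, hpre]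
    exact hcl
  refine ⟨Ω, hΩo, h0Ω, htube (closure Ω) isClosed_closure hclUA, ?_⟩
  intro f hf
  have hfeq : f = fun w => ⟨qmap H w.val, ⟨w.val, w.2, rfl⟩⟩ := by
    funext w
    exact Subtype.ext (hf w)
  refine ⟨?_, ?_, ?_⟩
  · -- continuity
    rw [hfeq]
    exact Continuous.subtype_mk ((qmap_isQuotientMap H).continuous.comp continuous_subtype_val) _
  · -- closed map
    intro C hC
    obtain ⟨F₀, hF₀c, hpre⟩ := isClosed_induced_iff.mp hC
    set F : Set G := F₀ ∩ closure Ω with hFdef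
    have hFc : IsClosed F := hF₀c.inter isClosed_closure
    have hFA : F ⊆ A := fun p hp => hclUA hp.2
    have hD : IsClosed (qmap H '' F) := htube F hFc hFA
    have himg : f '' C = Subtype.val ⁻¹' (qmap H '' F) := by
      ext ⟨ξ, hξ⟩
      constructor
      · rintro ⟨w, hwC, hw⟩
        have hξ2 : qmap H w.val = ξ := by
          rw [← hf w, hw]
        refine ⟨w.val, ⟨?_, w.2⟩, hξ2⟩
        have hw0 : w ∈ Subtype.val ⁻¹' F₀ := by rw [hpre]; exact hwC
        exact hw0
      · intro hmem
        obtain ⟨v, hvF, hvq⟩ := hmem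
        refine ⟨⟨v, hvF.2⟩, ?_, ?_⟩
        · have : (⟨v, hvF.2⟩ : ↥(closure Ω)) ∈ Subtype.val ⁻¹' F₀ := hvF.1
          rw [hpre] at this
          exact this
        · apply Subtype.ext
          rw [hf ⟨v, hvF.2⟩]
          exact hvq
    rw [himg]
    exact hD.preimage continuous_subtype_val
  · -- compact fibers
    intro y
    obtain ⟨z, hz, hzy⟩ := y.2
    have hfib : f ⁻¹' {y} = Subtype.val ⁻¹' (lCoset H z) := by
      ext w
      simp only [Set.mem_preimage, Set.mem_singleton_iff]
      rw [← Subtype.coe_inj, hf w, ← hzy]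
      rw [mem_lCoset_iff hH]
      constructor
      · intro h
        rw [← qmap_eq_iff hH]
        exact h.symm
      · intro h
        rw [← qmap_eq_iff hH] at h
        exact h.symm
    rw [hfib]
    rw [Subtype.isCompact_iff]
    have himg2 : Subtype.val '' (Subtype.val ⁻¹' (lCoset H z) : Set ↥(closure Ω))
        = closure Ω ∩ lCoset H z := Subtype.image_preimage_coe _ _
    rw [himg2]
    exact plate_compact hH hHc hK hsmallclU isClosed_closure z
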